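/- For every real number x and every positive integer n, the sum over k from 0 to n of 4^k * (n/(n+k)) * C(n+k, n-k) * (x^2-1)^k equals T_{2n}(x). -/

import Mathlib

open Finset Nat Polynomial Polynomial.Chebyshev

noncomputable def f (n k : ℕ) : ℝ :=
  if k ≤ n then 4^k * n * (n + k - 1)! / ((2*k)! * (n - k)!) else 0

lemma f_eq {n k : ℕ} (h : k ≤ n) :
    f n k = 4^k * n * (n + k - 1)! / ((2*k)! * (n - k)!) := if_pos h

lemma f_zero {n k : ℕ} (h : ¬ k ≤ n) : f n k = 0 := if_neg h

lemma f_0 {n : ℕ} (h : 1 ≤ n) : f n 0 = 1 := by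
  obtain ⟨m, rfl⟩ : ∃ m, n = m + 1 := ⟨n - 1, by omega⟩
  rw [f_eq (Nat.zero_le _)]
  rw [show m + 1 + 0 - 1 = m from by omega, show m + 1 - 0 = m + 1 from rfl,
      Nat.factorial_succ]
  have p : (m ! : ℝ) ≠ 0 := by positivity
  have p2 : ((m:ℝ) + 1) ≠ 0 := by positivity
  push_cast
  norm_num [Nat.factorial_zero]
  field_simp
  exact ⟨p2, Nat.factorial_ne_zero m⟩

lemma fcoeff {n k : ℕ} (hn : 1 ≤ n) (hk : k ≤ n + 1) :
    f (n+2) (k+1) - 2 * f (n+1) (k+1) + f n (k+1) = 4 * f (n+1) k := by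
  rcases Nat.lt_trichotomy k n with h | rfl | h
  · obtain ⟨m, rfl⟩ : ∃ m, n = k + 1 + m := ⟨n - (k+1), by omega⟩
    rw [f_eq (by omega : k+1 ≤ k+1+m+2), f_eq (by omega : k+1 ≤ k+1+m+1),
        f_eq (by omega : k+1 ≤ k+1+m), f_eq (by omega : k ≤ k+1+m+1)]
    simp only [show k+1+m+2+(k+1)-1 = 2*k+m+3 from by omega,
      show k+1+m+1+(k+1)-1 = 2*k+m+2 from by omega,
      show k+1+m+(k+1)-1 = 2*k+m+1 from by omega,
      show k+1+m+1+k-1 = 2*k+m+1 from by omega,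
      show k+1+m+2-(k+1) = m+2 from by omega,
      show k+1+m+1-(k+1) = m+1 from by omega,
      show k+1+m-(k+1) = m from by omega,
      show k+1+m+1-k = m+2 from by omega,
      show 2*(k+1) = 2*k+2 from by omega]
    have h1 : ((2*k+m+3)! : ℝ) = (2*k+m+3) * ((2*k+m+2) * (2*k+m+1)!) := by
      rw [show 2*k+m+3 = (2*k+m+2)+1 from rfl, Nat.factorial_succ,
          show 2*k+m+2 = (2*k+m+1)+1 from rfl, Nat.factorial_succ]
      push_cast; ring
    have h2 : ((2*k+m+2)! : ℝ) = (2*k+m+2) * (2*k+m+1)! := by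
      rw [show 2*k+m+2 = (2*k+m+1)+1 from rfl, Nat.factorial_succ]; push_cast; ring
    have h3 : ((2*k+2)! : ℝ) = (2*k+2) * ((2*k+1) * (2*k)!) := by
      rw [show 2*k+2 = (2*k+1)+1 from rfl, Nat.factorial_succ,
          show 2*k+1 = (2*k)+1 from rfl, Nat.factorial_succ]
      push_cast; ring
    have h4 : ((m+2)! : ℝ) = (m+2) * ((m+1) * m !) := by
      rw [show m+2 = (m+1)+1 from rfl, Nat.factorial_succ, Nat.factorial_succ]
      push_cast; ring
    have h5 : ((m+1)! : ℝ) = (m+1) * m ! := by rw [Nat.factorial_succ]; push_cast; ring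
    have p1 : ((2*k+m+1)! : ℝ) ≠ 0 := by positivity
    have p2 : ((2*k)! : ℝ) ≠ 0 := by positivity
    have p3 : (m ! : ℝ) ≠ 0 := by positivity
    rw [h1, h2, h3, h4, h5]
    push_cast
    field_simp
    ring
  · rw [f_eq (by omega : k+1 ≤ k+2), f_eq (by omega : k+1 ≤ k+1),
        f_zero (by omega : ¬ k+1 ≤ k), f_eq (by omega : k ≤ k+1)]
    simp only [show k+2+(k+1)-1 = 2*k+2 from by omega,
      show k+1+(k+1)-1 = 2*k+1 from by omega,
      show k+1+k-1 = 2*k from by omega,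
      show k+2-(k+1) = 1 from by omega,
      show k+1-(k+1) = 0 from by omega,
      show k+1-k = 1 from by omega,
      show 2*(k+1) = 2*k+2 from by omega]
    have h3 : ((2*k+2)! : ℝ) = (2*k+2) * ((2*k+1) * (2*k)!) := by
      rw [show 2*k+2 = (2*k+1)+1 from rfl, Nat.factorial_succ,
          show 2*k+1 = (2*k)+1 from rfl, Nat.factorial_succ]
      push_cast; ring
    have h2 : ((2*k+1)! : ℝ) = (2*k+1) * (2*k)! := by
      rw [show 2*k+1 = (2*k)+1 from rfl, Nat.factorial_succ]; push_cast; ring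
    have p2 : ((2*k)! : ℝ) ≠ 0 := by positivity
    rw [h3, h2]
    norm_num [Nat.factorial_zero, Nat.factorial_one]
    field_simp
    ring
  · have hk1 : k = n + 1 := by omega
    subst hk1
    rw [f_eq (by omega : n+1+1 ≤ n+2), f_zero (by omega : ¬ n+1+1 ≤ n+1),
        f_zero (by omega : ¬ n+1+1 ≤ n), f_eq (by omega : n+1 ≤ n+1)]
    simp only [show n+2+(n+1+1)-1 = 2*n+3 from by omega,
      show n+1+(n+1)-1 = 2*n+1 from by omega,
      show n+2-(n+1+1) = 0 from by omega,
      show n+1-(n+1) = 0 from by omega,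
      show 2*(n+1+1) = 2*n+4 from by omega,
      show 2*(n+1) = 2*n+2 from by omega]
    have h1 : ((2*n+4)! : ℝ) = (2*n+4) * (2*n+3)! := by
      rw [show 2*n+4 = (2*n+3)+1 from rfl, Nat.factorial_succ]; push_cast; ring
    have h2 : ((2*n+2)! : ℝ) = (2*n+2) * (2*n+1)! := by
      rw [show 2*n+2 = (2*n+1)+1 from rfl, Nat.factorial_succ]; push_cast; ring
    have p1 : ((2*n+3)! : ℝ) ≠ 0 := by positivity
    have p2 : ((2*n+1)! : ℝ) ≠ 0 := by positivity
    rw [h1, h2]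
    norm_num [Nat.factorial_zero]
    field_simp
    ring

lemma srec {n : ℕ} (hn : 1 ≤ n) (y : ℝ) :
    ∑ k ∈ range (n+3), f (n+2) k * y^k =
    (4*y+2) * ∑ k ∈ range (n+2), f (n+1) k * y^k - ∑ k ∈ range (n+1), f n k * y^k := by
  have e1 : ∑ k ∈ range (n+1), f n k * y^k = ∑ k ∈ range (n+3), f n k * y^k := by
    apply Finset.sum_subset (by intro a ha; simp at ha ⊢; omega)
    intro k _ hk
    rw [f_zero (by simp at hk; omega)]; ring
  have e2 : ∑ k ∈ range (n+2), f (n+1) k * y^k = ∑ k ∈ range (n+3), f (n+1) k * y^k := by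
    apply Finset.sum_subset (by intro a ha; simp at ha ⊢; omega)
    intro k _ hk
    rw [f_zero (by simp at hk; omega)]; ring
  rw [e1, e2]
  have key : ∑ k ∈ range (n+3), (f (n+2) k - 2*f (n+1) k + f n k) * y^k
      = 4*y * ∑ k ∈ range (n+3), f (n+1) k * y^k := by
    rw [Finset.sum_range_succ' (fun k => (f (n+2) k - 2*f (n+1) k + f n k) * y^k) (n+2)]
    rw [Finset.mul_sum]
    rw [Finset.sum_range_succ (fun k => 4*y*(f (n+1) k * y^k)) (n+2)]
    rw [f_zero (by omega : ¬ (n+2) ≤ (n+1))]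
    rw [f_0 (by omega : 1 ≤ n+2), f_0 (by omega : 1 ≤ n+1), f_0 hn]
    have hterm : ∀ k ∈ range (n+2),
        (f (n+2) (k+1) - 2*f (n+1) (k+1) + f n (k+1)) * y^(k+1)
          = 4*y*(f (n+1) k * y^k) := by
      intro k hk
      rw [fcoeff hn (by simp at hk; omega)]
      ring
    rw [Finset.sum_congr rfl hterm]
    ring
  have expand : ∑ k ∈ range (n+3), (f (n+2) k - 2*f (n+1) k + f n k) * y^k
      = (∑ k ∈ range (n+3), f (n+2) k * y^k)
        - 2*(∑ k ∈ range (n+3), f (n+1) k * y^k)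
        + (∑ k ∈ range (n+3), f n k * y^k) := by
    simp [sub_mul, add_mul, Finset.sum_add_distrib, Finset.sum_sub_distrib,
      Finset.mul_sum, mul_assoc]
  rw [expand] at key
  linear_combination key

lemma cheb_step (x : ℝ) (m : ℤ) :
    (T ℝ (m+4)).eval x = (4*x^2-2) * (T ℝ (m+2)).eval x - (T ℝ m).eval x := by
  have h0 := Polynomial.Chebyshev.T_add_two ℝ m
  have h1 := Polynomial.Chebyshev.T_add_two ℝ (m+1)
  have h2 := Polynomial.Chebyshev.T_add_two ℝ (m+2)
  rw [show m+1+2 = m+3 from by ring, show m+1+1 = m+2 from by ring] at h1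
  rw [show m+2+2 = m+4 from by ring, show m+2+1 = m+3 from by ring] at h2
  have hp : T ℝ (m+4) = (4*X^2-2) * T ℝ (m+2) - T ℝ m := by
    linear_combination h2 + 2*X*h1 + h0
  rw [hp]
  simp [Polynomial.eval_mul, Polynomial.eval_sub]

lemma term_eq {n k : ℕ} (hn : 1 ≤ n) (h : k ≤ n) :
    (4:ℝ)^k * ((n:ℝ)/((n:ℝ)+(k:ℝ))) * (Nat.choose (n+k) (n-k)) = f n k := by
  rw [f_eq h, Nat.cast_choose ℝ (show n-k ≤ n+k by omega),
      show n+k-(n-k) = 2*k from by omega]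
  rw [show n+k = (n+k-1)+1 from by omega]
  simp only [Nat.add_sub_cancel, Nat.factorial_succ]
  have p1 : ((n+k-1)! : ℝ) ≠ 0 := by positivity
  have p2 : ((n-k)! : ℝ) ≠ 0 := by positivity
  have p3 : ((2*k)! : ℝ) ≠ 0 := by positivity
  have p4 : ((n:ℝ) + (k:ℝ)) ≠ 0 := by
    have : (1:ℝ) ≤ (n:ℝ) := by exact_mod_cast hn
    positivity
  have hc : ((n+k-1:ℕ):ℝ) + 1 = (n:ℝ) + (k:ℝ) := by
    have h2 : ((n+k-1)+1 : ℕ) = n + k := by omega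
    calc ((n+k-1:ℕ):ℝ) + 1 = (((n+k-1)+1 : ℕ) : ℝ) := by push_cast; ring
    _ = ((n+k:ℕ):ℝ) := by rw [h2]
    _ = (n:ℝ)+(k:ℝ) := by push_cast; ring
  push_cast
  rw [hc]
  field_simp

lemma main_pair : ∀ n : ℕ,
    (∀ x : ℝ, ∑ k ∈ range (n+2), f (n+1) k * (x^2-1)^k = (T ℝ (2*(n:ℤ)+2)).eval x)
    ∧ (∀ x : ℝ, ∑ k ∈ range (n+3), f (n+2) k * (x^2-1)^k = (T ℝ (2*(n:ℤ)+4)).eval x) := by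
  intro n
  induction n with
  | zero =>
    constructor
    · intro x
      rw [Finset.sum_range_succ, Finset.sum_range_one, f_0 (le_refl 1),
          f_eq (le_refl 1)]
      norm_num [Nat.factorial]
      rw [Polynomial.Chebyshev.T_two]
      simp
      ring
    · intro x
      rw [Finset.sum_range_succ, Finset.sum_range_succ, Finset.sum_range_one,
          f_0 (by omega), f_eq (by omega : 1 ≤ 2), f_eq (le_refl 2)]
      norm_num [Nat.factorial]
      have hc := cheb_step x 0
      rw [show (0:ℤ)+4 = 4 from by ring, show (0:ℤ)+2 = 2 from by ring] at hc
      rw [hc, Polynomial.Chebyshev.T_two]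
      simp [Polynomial.Chebyshev.T_zero]
      ring
  | succ n ih =>
    refine ⟨?_, ?_⟩
    · intro x
      have h := ih.2 x
      show ∑ k ∈ range (n+3), f (n+2) k * (x^2-1)^k = (T ℝ (2*((n+1:ℕ):ℤ)+2)).eval x
      rw [show (2*((n+1:ℕ):ℤ)+2) = 2*(n:ℤ)+4 from by push_cast; ring]
      exact h
    · intro x
      have hs := srec (n := n+1) (by omega) (x^2-1)
      have hc := cheb_step x (2*(n:ℤ)+2)
      rw [show (2*(n:ℤ)+2+2) = 2*(n:ℤ)+4 from by ring] at hc
      show ∑ k ∈ range (n+1+3), f (n+1+2) k * (x^2-1)^k = (T ℝ (2*((n+1:ℕ):ℤ)+4)).eval x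
      rw [show (2*((n+1:ℕ):ℤ)+4) = 2*(n:ℤ)+2+4 from by push_cast; ring]
      rw [hc, ← ih.1 x, ← ih.2 x]
      rw [hs]
      ring

theorem stmt_1 (x : ℝ) (n : ℕ) (hn : 0 < n) :
    ∑ k ∈ range (n + 1), (4 : ℝ) ^ k * ((n : ℝ) / (n + k)) *
      (Nat.choose (n + k) (n - k)) * (x ^ 2 - 1) ^ k =
    (Polynomial.Chebyshev.T ℝ (2 * n)).eval x := by
  obtain ⟨m, rfl⟩ : ∃ m, n = m + 1 := ⟨n - 1, by omega⟩
  have h := (main_pair m).1 x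
  have ht : ∑ k ∈ range (m+2), f (m+1) k * (x^2-1)^k
      = ∑ k ∈ range (m+1+1), (4:ℝ)^k * (((m+1:ℕ):ℝ)/(((m+1:ℕ):ℝ)+(k:ℝ)))
          * (Nat.choose ((m+1)+k) ((m+1)-k)) * (x^2-1)^k := by
    apply Finset.sum_congr rfl
    intro k hk
    rw [← term_eq (by omega) (by simp at hk; omega)]
  rw [ht] at h
  rw [show (2*((m+1:ℕ):ℤ)) = 2*(m:ℤ)+2 from by push_cast; ring]
  convert h using 2
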